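/- Suppose h(x)=med(f(x),h(x),g(x)) for all x∈E. Then there is exactly one measurable function V:E→ℝ satisfying the equation: V(x)=med(f(x), αΠV(x), g(x)) for all x with f(x)<g(x), and V(x)=h(x) for all x with f(x)≥g(x). -/

import Mathlib

open MeasureTheory ProbabilityTheory Set Filter Topology

noncomputable section

namespace DynkinGame

variable {E : Type*} [MeasurableSpace E] {Ω : Type*} [MeasurableSpace Ω]

/-- Setup for a discrete-time Markovian Dynkin game: a time-homogeneous Markov process `X`
with Markov kernel `K` and laws `P x` (starting from `x`), for each player `i = 0, 1` an iid
sequence of `U(0,1)`-distributed randomization devices `ξ i n`, the whole family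
`(ξ i n)_{i,n}` together with the trajectory of `X` being mutually independent,
and a discount factor `α ∈ (0,1)`. -/
structure Setup (E : Type*) [MeasurableSpace E] (Ω : Type*) [MeasurableSpace Ω] where
  /-- the law of the game started at `x` -/
  P : E → Measure Ω
  isProb : ∀ x, IsProbabilityMeasure (P x)
  /-- the state process -/
  X : ℕ → Ω → E
  measX : ∀ n, Measurable (X n)
  /-- the randomization devices of the two players -/
  ξ : Fin 2 → ℕ → Ω → ℝ
  measξ : ∀ i n, Measurable (ξ i n)
  /-- the Markov kernel of `X` -/
  K : Kernel E E
  isMarkovKernel : IsMarkovKernel K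
  /-- the discount factor -/
  α : ℝ
  α_pos : 0 < α
  α_lt_one : α < 1
  /-- `X₀ = x` holds `P x`-a.s. -/
  init : ∀ x, ∀ᵐ ω ∂ P x, X 0 ω = x
  /-- the Markov property of `X` with transition kernel `K`, expressed through
  finite-dimensional distributions tested against bounded measurable functions -/
  markov : ∀ (x : E) (n : ℕ) (φ : (Fin (n + 1) → E) → ℝ) (F : E → ℝ),
    Measurable φ → Measurable F → (∃ C, ∀ v, |φ v| ≤ C) → (∃ C, ∀ y, |F y| ≤ C) →
    ∫ ω, φ (fun k => X k ω) * F (X (n + 1) ω) ∂ P x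
      = ∫ ω, φ (fun k => X k ω) * (∫ y, F y ∂ K (X n ω)) ∂ P x
  /-- each `ξ i n` is uniformly distributed on `[0,1]` -/
  unif : ∀ (x : E) (i : Fin 2) (n : ℕ),
    Measure.map (ξ i n) (P x) = volume.restrict (Icc (0 : ℝ) 1)
  /-- the random variables `ξ i n` (`i = 0,1`, `n ∈ ℕ`) and the trajectory of `X`
  are mutually independent -/
  indep : ∀ x : E, iIndep
    (fun j : Option (Fin 2 × ℕ) =>
      match j with
      | none => MeasurableSpace.comap (fun ω k => X k ω) inferInstance
      | some (i, n) => MeasurableSpace.comap (ξ i n) inferInstance)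
    (P x)

/-- The filtration `σ(X₀,…,Xₙ, ξ₀⁽ⁱ⁾,…,ξₙ⁽ⁱ⁾)` of player `i`. -/
def Setup.filt (S : Setup E Ω) (i : Fin 2) (n : ℕ) : MeasurableSpace Ω :=
  (⨆ k ∈ Iic n, MeasurableSpace.comap (S.X k) inferInstance) ⊔
    ⨆ k ∈ Iic n, MeasurableSpace.comap (S.ξ i k) inferInstance

/-- The admissible stopping times `𝒯ᵢ` of player `i`: stopping times with respect to the
filtration `σ(X₀,…,Xₙ, ξ₀⁽ⁱ⁾,…,ξₙ⁽ⁱ⁾)`, with values in `ℕ∞`. -/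
def Setup.Adm (S : Setup E Ω) (i : Fin 2) : Set (Ω → ℕ∞) :=
  {τ | ∀ n : ℕ, MeasurableSet[S.filt i n] {ω | τ ω ≤ (n : ℕ∞)}}

/-- The Markovian randomized stopping time `τᵖ = inf {n : p (Xₙ) ≥ ξₙ⁽ⁱ⁾}` (with `inf ∅ = ∞`). -/
def Setup.mrst (S : Setup E Ω) (i : Fin 2) (p : E → ℝ) (ω : Ω) : ℕ∞ :=
  ⨅ n ∈ {n : ℕ | S.ξ i n ω ≤ p (S.X n ω)}, (n : ℕ∞)

/-- The discounted payoff `α ^ τ • φ (X_τ)`, read as `0` on `{τ = ∞}`. -/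
def Setup.disc (S : Setup E Ω) (φ : E → ℝ) (τ : Ω → ℕ∞) (ω : Ω) : ℝ :=
  if τ ω = ⊤ then 0 else S.α ^ (τ ω).toNat * φ (S.X (τ ω).toNat ω)

/-- Pathwise reward of a player using stopping time `σ` against the opponent's `τ`:
`α^σ f(X_σ) 1{σ<τ} + α^τ g(X_τ) 1{τ<σ} + α^σ h(X_σ) 1{σ=τ<∞}`. -/
def Setup.payoff (S : Setup E Ω) (f g h : E → ℝ) (σ τ : Ω → ℕ∞) (ω : Ω) : ℝ :=
  (if σ ω < τ ω then S.disc f σ ω else 0) +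
    (if τ ω < σ ω then S.disc g τ ω else 0) +
      (if σ ω = τ ω then S.disc h σ ω else 0)

/-- Expected reward `J(x; σ, τ)` of the player using stopping time `σ` against `τ`. -/
def Setup.J (S : Setup E Ω) (f g h : E → ℝ) (σ τ : Ω → ℕ∞) (x : E) : ℝ :=
  ∫ ω, S.payoff f g h σ τ ω ∂ S.P x

/-- A Markovian (randomized) stopping strategy: a measurable function `E → [0,1]`. -/
def IsStrategy (p : E → ℝ) : Prop := Measurable p ∧ ∀ x, p x ∈ Icc (0 : ℝ) 1

/-- A pure stopping strategy. -/
def IsPure (p : E → ℝ) : Prop := ∀ x, p x = 0 ∨ p x = 1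

/-- `ΠV(x) = ∫ V dΠ(x,·)`, the integral with respect to the transition kernel. -/
def Setup.kint (S : Setup E Ω) (V : E → ℝ) (x : E) : ℝ := ∫ y, V y ∂ S.K x

/-- `E_x [sup_n φ(X̃ₙ)] < ∞` for every `x`, where `X̃` is the process `X` killed at each step
independently with probability `1 - α` (and `φ` vanishes at the cemetery state); equivalently,
with an independent geometric killing time `T`,
`E_x[sup_{n ≤ T} φ(Xₙ) ∨ 0] = ∑ₖ (1-α) αᵏ E_x[max_{n ≤ k} φ(Xₙ) ∨ 0] < ∞`. -/
def Setup.KilledSupFin (S : Setup E Ω) (φ : E → ℝ) : Prop :=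
  ∀ x : E,
    (∑' k : ℕ, ENNReal.ofReal ((1 - S.α) * S.α ^ k) *
      ∫⁻ ω, (Finset.range (k + 1)).sup (fun n => ENNReal.ofReal (φ (S.X n ω))) ∂ S.P x) < ⊤

/-- Standing integrability assumption: `sup_n |φ(X̃ₙ)| ∈ L¹(P_x)` for every `x`. -/
def Setup.KilledSupInt (S : Setup E Ω) (φ : E → ℝ) : Prop :=
  S.KilledSupFin fun x => |φ x|

/-- `(τ₁, τ₂)` is a Nash equilibrium for `x`: each player's stopping time attains the
supremum of the expected reward over admissible stopping times, the opponent's being fixed. -/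
def Setup.IsNashAt (S : Setup E Ω) (f g h : Fin 2 → E → ℝ) (τ₁ τ₂ : Ω → ℕ∞) (x : E) : Prop :=
  (S.J (f 0) (g 0) (h 0) τ₁ τ₂ x = ⨆ σ : S.Adm 0, S.J (f 0) (g 0) (h 0) σ.1 τ₂ x) ∧
    (S.J (f 1) (g 1) (h 1) τ₂ τ₁ x = ⨆ σ : S.Adm 1, S.J (f 1) (g 1) (h 1) σ.1 τ₁ x)

/-- `(p 0, p 1)` is a global Markovian randomized equilibrium: the associated pair of
Markovian randomized stopping times is a Nash equilibrium for every `x ∈ E`. -/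
def Setup.IsGlobalEq (S : Setup E Ω) (f g h : Fin 2 → E → ℝ) (p : Fin 2 → E → ℝ) : Prop :=
  IsStrategy (p 0) ∧ IsStrategy (p 1) ∧
    ∀ x : E, S.IsNashAt f g h (S.mrst 0 (p 0)) (S.mrst 1 (p 1)) x

/-- Zero-sum game: `(p₁, p₂)` is a global Markovian randomized equilibrium when for every `x`,
`τ^{p₁}` maximizes `J₁(x; ·, τ^{p₂})` over `𝒯₁` and `τ^{p₂}` minimizes `J₁(x; τ^{p₁}, ·)`
over `𝒯₂`. -/
def Setup.IsZSEq (S : Setup E Ω) (f g h : E → ℝ) (p₁ p₂ : E → ℝ) : Prop :=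
  IsStrategy p₁ ∧ IsStrategy p₂ ∧
    ∀ x : E,
      (S.J f g h (S.mrst 0 p₁) (S.mrst 1 p₂) x =
        ⨆ σ : S.Adm 0, S.J f g h σ.1 (S.mrst 1 p₂) x) ∧
      (S.J f g h (S.mrst 0 p₁) (S.mrst 1 p₂) x =
        ⨅ σ : S.Adm 1, S.J f g h (S.mrst 0 p₁) σ.1 x)


/-- The middle value of three reals: `med a b c = min (max a b) (min (max a c) (max b c))`. -/
def med (a b c : ℝ) : ℝ := min (min (max a b) (max a c)) (max b c)

/-- `V` solves the fixed point equation `V(x) = med(f(x), αΠV(x), g(x))` when `f(x) < g(x)`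
and `V(x) = h(x)` when `f(x) ≥ g(x)`. -/
def Setup.SolvesMed (S : Setup E Ω) (f g h V : E → ℝ) : Prop :=
  ∀ x : E, (f x < g x → V x = med (f x) (S.α * S.kint V x) (g x)) ∧
    (g x ≤ f x → V x = h x)

open scoped ENNReal NNReal

/-! ### Auxiliary lemmas about `med` -/

lemma med_le_max (a b c : ℝ) : med a b c ≤ max a c :=
  le_trans (min_le_left _ _) (min_le_right _ _)

lemma min_le_med (a b c : ℝ) : min a c ≤ med a b c := by
  refine le_min (le_min ?_ min_le_max) ?_
  · exact (min_le_left a c).trans (le_max_left a b)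
  · exact (min_le_right a c).trans (le_max_right b c)

lemma abs_med_le (a b c : ℝ) : |med a b c| ≤ |a| + |c| := by
  have h1 := min_le_med a b c
  have h2 := med_le_max a b c
  have ha := abs_nonneg a; have hc := abs_nonneg c
  have ha1 := neg_abs_le a; have hc1 := neg_abs_le c
  have ha2 := le_abs_self a; have hc2 := le_abs_self c
  rw [abs_le]; constructor
  · rcases le_total a c with hac | hac
    · rw [min_eq_left hac] at h1; linarith
    · rw [min_eq_right hac] at h1; linarith
  · rcases le_total a c with hac | hac
    · rw [max_eq_right hac] at h2; linarith
    · rw [max_eq_left hac] at h2; linarith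

lemma med_lipschitz (a b b' c : ℝ) : |med a b c - med a b' c| ≤ |b - b'| := by
  unfold med
  have key : |min (min (max a b) (max a c)) (max b c)
      - min (min (max a b') (max a c)) (max b' c)|
      ≤ max |min (max a b) (max a c) - min (max a b') (max a c)| |max b c - max b' c| :=
    abs_min_sub_min_le_max _ _ _ _
  have habs : (0:ℝ) ≤ |b - b'| := abs_nonneg _
  refine key.trans (max_le ?_ ?_)
  · have h1 : |min (max a b) (max a c) - min (max a b') (max a c)|
        ≤ max |max a b - max a b'| |max a c - max a c| := abs_min_sub_min_le_max _ _ _ _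
    have h2 : |max a b - max a b'| ≤ max |a - a| |b - b'| := abs_max_sub_max_le_max _ _ _ _
    simp only [sub_self, abs_zero] at h1 h2
    rw [max_eq_left (abs_nonneg (max a b - max a b'))] at h1
    rw [max_eq_right habs] at h2
    exact h1.trans h2
  · have h2 : |max b c - max b' c| ≤ max |b - b'| |c - c| := abs_max_sub_max_le_max _ _ _ _
    simp only [sub_self, abs_zero] at h2
    rwa [max_eq_left habs] at h2

/-! ### Kernel operators -/

/-- one-step kernel operator on `ℝ≥0∞`-valued functions -/
def Setup.lkop (S : Setup E Ω) (u : E → ℝ≥0∞) (x : E) : ℝ≥0∞ := ∫⁻ y, u y ∂ S.K x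

/-- `n`-step kernel operator on `ℝ≥0∞`-valued functions -/
def Setup.lkIter (S : Setup E Ω) : ℕ → (E → ℝ≥0∞) → E → ℝ≥0∞
  | 0 => fun u => u
  | n+1 => fun u => S.lkIter n (S.lkop u)

/-- `n`-step kernel operator on real valued functions -/
def Setup.rkIter (S : Setup E Ω) : ℕ → (E → ℝ) → E → ℝ
  | 0 => fun F => F
  | n+1 => fun F => S.rkIter n (S.kint F)

lemma lkop_meas (S : Setup E Ω) {u : E → ℝ≥0∞} (hu : Measurable u) :
    Measurable (S.lkop u) := by
  haveI := S.isMarkovKernel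
  exact Measurable.lintegral_kernel_prod_right (f := fun _ y => u y) (hu.comp measurable_snd)

lemma kint_meas (S : Setup E Ω) {V : E → ℝ} (hV : Measurable V) : Measurable (S.kint V) := by
  haveI := S.isMarkovKernel
  exact (MeasureTheory.StronglyMeasurable.integral_kernel_prod_right
    (f := fun _ y => V y) (hV.comp measurable_snd).stronglyMeasurable).measurable

lemma lkop_mono (S : Setup E Ω) {u v : E → ℝ≥0∞} (huv : ∀ y, u y ≤ v y) (x : E) :
    S.lkop u x ≤ S.lkop v x := lintegral_mono huv

lemma lkop_cmul (S : Setup E Ω) {u : E → ℝ≥0∞} (hu : Measurable u) (c : ℝ≥0∞) (x : E) :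
    S.lkop (fun y => c * u y) x = c * S.lkop u x := lintegral_const_mul c hu

lemma lkIter_zero (S : Setup E Ω) (u : E → ℝ≥0∞) : S.lkIter 0 u = u := rfl

lemma lkIter_succ (S : Setup E Ω) (n : ℕ) (u : E → ℝ≥0∞) :
    S.lkIter (n+1) u = S.lkIter n (S.lkop u) := rfl

lemma lkIter_meas (S : Setup E Ω) (n : ℕ) :
    ∀ {u : E → ℝ≥0∞}, Measurable u → Measurable (S.lkIter n u) := by
  induction n with
  | zero => intro u hu; exact hu
  | succ n ih => intro u hu; rw [lkIter_succ]; exact ih (lkop_meas S hu)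

lemma lkIter_mono (S : Setup E Ω) (n : ℕ) :
    ∀ {u v : E → ℝ≥0∞}, (∀ y, u y ≤ v y) → ∀ x, S.lkIter n u x ≤ S.lkIter n v x := by
  induction n with
  | zero => intro u v huv x; exact huv x
  | succ n ih =>
    intro u v huv x; rw [lkIter_succ, lkIter_succ]
    exact ih (fun y => lkop_mono S huv y) x

lemma lkIter_cmul (S : Setup E Ω) (n : ℕ) :
    ∀ {u : E → ℝ≥0∞}, Measurable u → ∀ (c : ℝ≥0∞) (x : E),
      S.lkIter n (fun y => c * u y) x = c * S.lkIter n u x := by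
  induction n with
  | zero => intro u _ c x; rfl
  | succ n ih =>
    intro u hu c x
    rw [lkIter_succ, lkIter_succ]
    have h1 : S.lkop (fun y => c * u y) = fun y => c * S.lkop u y :=
      funext fun y => lkop_cmul S hu c y
    rw [h1]
    exact ih (lkop_meas S hu) c x

lemma lkIter_comm (S : Setup E Ω) (n : ℕ) :
    ∀ {u : E → ℝ≥0∞}, Measurable u → S.lkIter n (S.lkop u) = S.lkop (S.lkIter n u) := by
  induction n with
  | zero => intro u _; rfl
  | succ n ih =>
    intro u hu
    rw [lkIter_succ, lkIter_succ, ih (lkop_meas S hu)]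

lemma lkIter_sup (S : Setup E Ω) (n : ℕ) :
    ∀ (u : ℕ → E → ℝ≥0∞), (∀ m, Measurable (u m)) → Monotone u → ∀ x,
      S.lkIter n (fun y => ⨆ m, u m y) x = ⨆ m, S.lkIter n (u m) x := by
  induction n with
  | zero => intro u _ _ x; rfl
  | succ n ih =>
    intro u hu hmono x
    rw [lkIter_succ]
    have h1 : S.lkop (fun y => ⨆ m, u m y) = fun z => ⨆ m, S.lkop (u m) z := by
      funext z
      exact MeasureTheory.lintegral_iSup hu hmono
    rw [h1]
    have := ih (fun m => S.lkop (u m)) (fun m => lkop_meas S (hu m))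
      (fun m k hmk z => lkop_mono S (fun y => hmono hmk y) z) x
    rw [this]
    refine le_antisymm (iSup_le fun m => ?_) (iSup_le fun m => ?_)
    · rw [← lkIter_succ]; exact le_iSup (fun m => S.lkIter (n+1) (u m) x) m
    · rw [lkIter_succ]; exact le_iSup (fun m => S.lkIter n (S.lkop (u m)) x) m

/-! ### Bounded measurable functions under the kernel -/

lemma integrable_bdd {β : Type*} [MeasurableSpace β] (μ : Measure β) [IsFiniteMeasure μ]
    {F : β → ℝ} (hF : Measurable F) {C : ℝ} (hb : ∀ y, |F y| ≤ C) : Integrable F μ :=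
  Integrable.mono' (integrable_const C) hF.aestronglyMeasurable
    (Filter.Eventually.of_forall fun y => by simpa [Real.norm_eq_abs] using hb y)

lemma abs_kint_le (S : Setup E Ω) {F : E → ℝ} (hF : Measurable F) {C : ℝ}
    (hb : ∀ y, |F y| ≤ C) (x : E) : |S.kint F x| ≤ C := by
  haveI := S.isMarkovKernel
  have h1 : |S.kint F x| ≤ ∫ y, |F y| ∂ S.K x := by
    simpa [Real.norm_eq_abs, Setup.kint] using norm_integral_le_integral_norm (μ := S.K x) F
  refine h1.trans ?_
  have h2 : ∫ y, |F y| ∂ S.K x ≤ ∫ _, C ∂ S.K x :=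
    integral_mono (integrable_bdd _ hF.abs (fun y => by rw [abs_abs]; exact hb y))
      (integrable_const C) hb
  simpa using h2

lemma ofReal_kint (S : Setup E Ω) {F : E → ℝ} (hF : Measurable F) {C : ℝ}
    (h0 : ∀ y, 0 ≤ F y) (hb : ∀ y, F y ≤ C) (x : E) :
    ENNReal.ofReal (S.kint F x) = S.lkop (fun y => ENNReal.ofReal (F y)) x := by
  haveI := S.isMarkovKernel
  exact MeasureTheory.ofReal_integral_eq_lintegral_ofReal
    (integrable_bdd _ hF fun y => by rw [abs_of_nonneg (h0 y)]; exact hb y)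
    (Filter.Eventually.of_forall h0)

lemma rkIter_props (S : Setup E Ω) (n : ℕ) :
    ∀ {F : E → ℝ} {C : ℝ}, Measurable F → (∀ y, 0 ≤ F y) → (∀ y, F y ≤ C) →
      Measurable (S.rkIter n F) ∧ (∀ x, 0 ≤ S.rkIter n F x) ∧ (∀ x, S.rkIter n F x ≤ C) ∧
        ∀ x, ENNReal.ofReal (S.rkIter n F x) =
          S.lkIter n (fun y => ENNReal.ofReal (F y)) x := by
  induction n with
  | zero => intro F C hF h0 hb; exact ⟨hF, h0, hb, fun _ => rfl⟩
  | succ n ih =>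
    intro F C hF h0 hb
    have hbabs : ∀ y, |F y| ≤ C := fun y => by rw [abs_of_nonneg (h0 y)]; exact hb y
    have hint : Measurable (S.kint F) := kint_meas S hF
    have h0' : ∀ x, 0 ≤ S.kint F x := fun x => integral_nonneg h0
    have hb' : ∀ x, S.kint F x ≤ C := fun x =>
      (le_abs_self _).trans (abs_kint_le S hF hbabs x)
    obtain ⟨m1, m2, m3, m4⟩ := ih hint h0' hb'
    refine ⟨m1, m2, m3, fun x => ?_⟩
    have heq : (fun y => ENNReal.ofReal (S.kint F y)) =
        S.lkop (fun y => ENNReal.ofReal (F y)) := funext fun y => ofReal_kint S hF h0 hb y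
    calc ENNReal.ofReal (S.rkIter (n+1) F x)
        = ENNReal.ofReal (S.rkIter n (S.kint F) x) := rfl
      _ = S.lkIter n (fun y => ENNReal.ofReal (S.kint F y)) x := m4 x
      _ = S.lkIter (n+1) (fun y => ENNReal.ofReal (F y)) x := by
          rw [heq, lkIter_succ]

/-! ### Iterated Markov property -/

lemma markov_iter (S : Setup E Ω) (n : ℕ) :
    ∀ {F : E → ℝ} {C : ℝ}, Measurable F → (∀ y, |F y| ≤ C) → ∀ x,
      ∫ ω, F (S.X n ω) ∂ S.P x = S.rkIter n F x := by
  induction n with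
  | zero =>
    intro F C hF hb x
    haveI := S.isProb x
    have hae : ∀ᵐ ω ∂ S.P x, F (S.X 0 ω) = F x := (S.init x).mono fun ω hω => by rw [hω]
    rw [integral_congr_ae hae, integral_const]
    simp [Setup.rkIter]
  | succ n ih =>
    intro F C hF hb x
    have step := S.markov x n (fun _ => 1) F measurable_const hF
      ⟨1, fun _ => by norm_num⟩ ⟨C, hb⟩
    simp only [one_mul] at step
    rw [step]
    exact ih (kint_meas S hF) (abs_kint_le S hF hb) x

/-! ### Consequences of the standing integrability assumption -/

lemma killed_tail (S : Setup E Ω) {φ : E → ℝ} (hI : S.KilledSupInt φ) (x : E) :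
    (∑' n : ℕ, ENNReal.ofReal S.α ^ n *
      ∫⁻ ω, ENNReal.ofReal |φ (S.X n ω)| ∂ S.P x) ≠ ⊤ := by
  have h := hI x
  set c : ℝ≥0∞ := ENNReal.ofReal (1 - S.α) with hc
  have hα1 := S.α_lt_one
  have hα0 := S.α_pos
  have hc0 : c ≠ 0 := by
    simp only [hc, ne_eq, ENNReal.ofReal_eq_zero, not_le]; linarith
  have hct : c ≠ ⊤ := ENNReal.ofReal_ne_top
  have hterm : ∀ n : ℕ, ENNReal.ofReal S.α ^ n *
      (∫⁻ ω, ENNReal.ofReal |φ (S.X n ω)| ∂ S.P x) ≤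
      c⁻¹ * (ENNReal.ofReal ((1 - S.α) * S.α ^ n) *
        ∫⁻ ω, (Finset.range (n + 1)).sup
          (fun k => ENNReal.ofReal (|φ (S.X k ω)|)) ∂ S.P x) := by
    intro n
    have hA : (∫⁻ ω, ENNReal.ofReal |φ (S.X n ω)| ∂ S.P x) ≤
        ∫⁻ ω, (Finset.range (n + 1)).sup
          (fun k => ENNReal.ofReal (|φ (S.X k ω)|)) ∂ S.P x :=
      lintegral_mono fun ω => Finset.le_sup (f := fun k => ENNReal.ofReal (|φ (S.X k ω)|))
        (Finset.self_mem_range_succ n)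
    have hsplit : ENNReal.ofReal ((1 - S.α) * S.α ^ n) = c * ENNReal.ofReal S.α ^ n := by
      rw [ENNReal.ofReal_mul (by linarith), ENNReal.ofReal_pow hα0.le]
    rw [hsplit, mul_assoc, ← mul_assoc c⁻¹ c, ENNReal.inv_mul_cancel hc0 hct, one_mul]
    exact mul_le_mul_right hA _
  refine ne_top_of_le_ne_top ?_ (ENNReal.tsum_le_tsum hterm)
  rw [ENNReal.tsum_mul_left]
  exact ENNReal.mul_ne_top (ENNReal.inv_ne_top.mpr hc0) h.ne

lemma killed_term_fin (S : Setup E Ω) {φ : E → ℝ} (hI : S.KilledSupInt φ) (x : E) (n : ℕ)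
    (hn : 0 < n) : (∫⁻ ω, ENNReal.ofReal |φ (S.X n ω)| ∂ S.P x) ≠ ⊤ := by
  have h := ENNReal.ne_top_of_tsum_ne_top (killed_tail S hI x) n
  intro hcon
  rw [hcon, ENNReal.mul_top] at h
  · exact h rfl
  · exact pow_ne_zero n (by simp only [ne_eq, ENNReal.ofReal_eq_zero, not_le]; exact S.α_pos)

lemma sup_min_natCast (s : ℝ) : ⨆ m : ℕ, ENNReal.ofReal (min s m) = ENNReal.ofReal s := by
  refine le_antisymm (iSup_le fun m => ENNReal.ofReal_le_ofReal (min_le_left _ _)) ?_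
  refine le_iSup_of_le ⌈s⌉₊ ?_
  rw [min_eq_left (Nat.le_ceil s)]

/-- the dominating function `|f| + |g|` is integrable with respect to every `K x` -/
lemma Mb_integrable (S : Setup E Ω) {f g : E → ℝ} (hmf : Measurable f) (hmg : Measurable g)
    (hIf : S.KilledSupInt f) (hIg : S.KilledSupInt g) (x : E) :
    Integrable (fun y => |f y| + |g y|) (S.K x) := by
  haveI := S.isMarkovKernel
  haveI := S.isProb x
  have hMb : Measurable fun y => |f y| + |g y| := hmf.abs.add hmg.abs
  have hMb0 : ∀ y, (0:ℝ) ≤ |f y| + |g y| := fun y => add_nonneg (abs_nonneg _) (abs_nonneg _)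
  -- the truncations
  set Fm : ℕ → E → ℝ := fun m y => min (|f y| + |g y|) m with hFm
  have hFmmeas : ∀ m, Measurable (Fm m) := fun m => hMb.min measurable_const
  have hFm0 : ∀ m y, 0 ≤ Fm m y := fun m y => le_min (hMb0 y) (Nat.cast_nonneg m)
  have hFmle : ∀ m y, Fm m y ≤ (m : ℝ) := fun m y => min_le_right _ _
  have hFmabs : ∀ m y, |Fm m y| ≤ (m : ℝ) := fun m y => by
    rw [abs_of_nonneg (hFm0 m y)]; exact hFmle m y
  -- the bound on the truncated kernel integrals
  have hbound : ∀ m : ℕ, (∫⁻ y, ENNReal.ofReal (Fm m y) ∂ S.K x) ≤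
      (∫⁻ ω, ENNReal.ofReal |f (S.X 1 ω)| ∂ S.P x) +
        ∫⁻ ω, ENNReal.ofReal |g (S.X 1 ω)| ∂ S.P x := by
    intro m
    have e1 : (∫⁻ y, ENNReal.ofReal (Fm m y) ∂ S.K x) = ENNReal.ofReal (S.kint (Fm m) x) :=
      (ofReal_kint S (hFmmeas m) (hFm0 m) (hFmle m) x).symm
    have e2 : S.kint (Fm m) x = ∫ ω, Fm m (S.X 1 ω) ∂ S.P x :=
      (markov_iter S 1 (hFmmeas m) (hFmabs m) x).symm
    have e3 : ENNReal.ofReal (∫ ω, Fm m (S.X 1 ω) ∂ S.P x) =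
        ∫⁻ ω, ENNReal.ofReal (Fm m (S.X 1 ω)) ∂ S.P x :=
      MeasureTheory.ofReal_integral_eq_lintegral_ofReal
        (integrable_bdd _ ((hFmmeas m).comp (S.measX 1)) (fun ω => hFmabs m _))
        (Filter.Eventually.of_forall fun ω => hFm0 m _)
    rw [e1, e2, e3]
    calc ∫⁻ ω, ENNReal.ofReal (Fm m (S.X 1 ω)) ∂ S.P x
        ≤ ∫⁻ ω, (ENNReal.ofReal |f (S.X 1 ω)| + ENNReal.ofReal |g (S.X 1 ω)|) ∂ S.P x := by
          refine lintegral_mono fun ω => ?_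
          rw [← ENNReal.ofReal_add (abs_nonneg _) (abs_nonneg _)]
          exact ENNReal.ofReal_le_ofReal (min_le_left _ _)
      _ = _ := lintegral_add_left ((hmf.comp (S.measX 1)).abs.ennreal_ofReal) _
  refine ⟨hMb.aestronglyMeasurable, ?_⟩
  have hnorm : (fun y => (‖|f y| + |g y|‖₊ : ℝ≥0∞)) =
      fun y => ENNReal.ofReal (|f y| + |g y|) :=
    funext fun y => Real.enorm_eq_ofReal (hMb0 y)
  rw [MeasureTheory.hasFiniteIntegral_iff_norm]
  have hnorm2 : (∫⁻ y, ENNReal.ofReal ‖|f y| + |g y|‖ ∂ S.K x) =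
      ∫⁻ y, ENNReal.ofReal (|f y| + |g y|) ∂ S.K x := by
    refine lintegral_congr fun y => ?_
    rw [Real.norm_eq_abs, abs_of_nonneg (hMb0 y)]
  rw [hnorm2]
  -- monotone convergence
  have hsup : (∫⁻ y, ENNReal.ofReal (|f y| + |g y|) ∂ S.K x) =
      ⨆ m : ℕ, ∫⁻ y, ENNReal.ofReal (Fm m y) ∂ S.K x := by
    have hlsup := MeasureTheory.lintegral_iSup (μ := S.K x)
      (f := fun m y => ENNReal.ofReal (Fm m y))
      (fun m => (hFmmeas m).ennreal_ofReal)
      (fun m k hmk y => ENNReal.ofReal_le_ofReal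
        (min_le_min le_rfl (Nat.cast_le.mpr hmk)))
    rw [← hlsup]
    exact lintegral_congr fun y => (sup_min_natCast _).symm
  rw [hsup]
  refine lt_of_le_of_lt (iSup_le fun m => hbound m) ?_
  exact ENNReal.add_lt_top.mpr ⟨(killed_term_fin S hIf x 1 one_pos).lt_top,
    (killed_term_fin S hIg x 1 one_pos).lt_top⟩

/-! ### The Bellman operator -/

/-- the zero-sum Wald–Bellman operator -/
def Setup.bT (S : Setup E Ω) (f g h W : E → ℝ) (x : E) : ℝ :=
  if f x < g x then med (f x) (S.α * S.kint W x) (g x) else h x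

lemma solves_iff (S : Setup E Ω) (f g h V : E → ℝ) :
    S.SolvesMed f g h V ↔ ∀ x, V x = S.bT f g h V x := by
  constructor
  · intro hs x
    by_cases hfg : f x < g x
    · rw [Setup.bT, if_pos hfg]; exact (hs x).1 hfg
    · rw [Setup.bT, if_neg hfg]; exact (hs x).2 (le_of_not_gt hfg)
  · intro hT x
    constructor
    · intro hfg; rw [hT x, Setup.bT, if_pos hfg]
    · intro hgf; rw [hT x, Setup.bT, if_neg (not_lt.mpr hgf)]

lemma bT_meas (S : Setup E Ω) {f g h W : E → ℝ} (hmf : Measurable f) (hmg : Measurable g)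
    (hmh : Measurable h) (hW : Measurable W) : Measurable (S.bT f g h W) := by
  have hb : Measurable fun x => S.α * S.kint W x := measurable_const.mul (kint_meas S hW)
  have hmed : Measurable fun x => med (f x) (S.α * S.kint W x) (g x) := by
    simp only [med]
    exact ((hmf.max hb).min (hmf.max hmg)).min (hb.max hmg)
  exact Measurable.ite (measurableSet_lt hmf hmg) hmed hmh

lemma bT_bnd (S : Setup E Ω) {f g h : E → ℝ} (hmed : ∀ x, h x = med (f x) (h x) (g x))
    (W : E → ℝ) (x : E) : |S.bT f g h W x| ≤ |f x| + |g x| := by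
  by_cases hfg : f x < g x
  · rw [Setup.bT, if_pos hfg]; exact abs_med_le _ _ _
  · rw [Setup.bT, if_neg hfg, hmed x]; exact abs_med_le _ _ _

lemma bT_contraction (S : Setup E Ω) {f g h U₁ U₂ : E → ℝ}
    (hU₁ : Measurable U₁) (hU₂ : Measurable U₂)
    (hb₁ : ∀ y, |U₁ y| ≤ |f y| + |g y|) (hb₂ : ∀ y, |U₂ y| ≤ |f y| + |g y|) (x : E)
    (hMint : Integrable (fun y => |f y| + |g y|) (S.K x)) :
    ENNReal.ofReal |S.bT f g h U₁ x - S.bT f g h U₂ x| ≤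
      ENNReal.ofReal S.α * S.lkop (fun y => ENNReal.ofReal |U₁ y - U₂ y|) x := by
  haveI := S.isMarkovKernel
  by_cases hfg : f x < g x
  · have hi₁ : Integrable U₁ (S.K x) := hMint.mono' hU₁.aestronglyMeasurable
      (Filter.Eventually.of_forall fun y => by simpa [Real.norm_eq_abs] using hb₁ y)
    have hi₂ : Integrable U₂ (S.K x) := hMint.mono' hU₂.aestronglyMeasurable
      (Filter.Eventually.of_forall fun y => by simpa [Real.norm_eq_abs] using hb₂ y)
    have h1 : |S.bT f g h U₁ x - S.bT f g h U₂ x| ≤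
        S.α * |S.kint U₁ x - S.kint U₂ x| := by
      simp only [Setup.bT, if_pos hfg]
      refine (med_lipschitz _ _ _ _).trans ?_
      rw [← mul_sub, abs_mul, abs_of_nonneg S.α_pos.le]
    have h2 : |S.kint U₁ x - S.kint U₂ x| ≤ ∫ y, |U₁ y - U₂ y| ∂ S.K x := by
      have hsub : S.kint U₁ x - S.kint U₂ x = ∫ y, (U₁ y - U₂ y) ∂ S.K x :=
        (integral_sub hi₁ hi₂).symm
      rw [hsub]
      simpa [Real.norm_eq_abs] using
        norm_integral_le_integral_norm (μ := S.K x) (fun y => U₁ y - U₂ y)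
    calc ENNReal.ofReal |S.bT f g h U₁ x - S.bT f g h U₂ x|
        ≤ ENNReal.ofReal (S.α * ∫ y, |U₁ y - U₂ y| ∂ S.K x) :=
          ENNReal.ofReal_le_ofReal
            (h1.trans (mul_le_mul_of_nonneg_left h2 S.α_pos.le))
      _ = ENNReal.ofReal S.α * ENNReal.ofReal (∫ y, |U₁ y - U₂ y| ∂ S.K x) :=
          ENNReal.ofReal_mul S.α_pos.le
      _ = ENNReal.ofReal S.α * S.lkop (fun y => ENNReal.ofReal |U₁ y - U₂ y|) x := by
          rw [MeasureTheory.ofReal_integral_eq_lintegral_ofReal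
            (f := fun y => |U₁ y - U₂ y|) ((hi₁.sub hi₂).abs)
            (Filter.Eventually.of_forall fun y => abs_nonneg _)]
          rfl
  · simp only [Setup.bT, if_neg hfg, sub_self, abs_zero, ENNReal.ofReal_zero]
    exact zero_le

/-! ### Iteration of the contraction bound -/

lemma iter_bound (S : Setup E Ω) (d : ℕ → E → ℝ≥0∞) (hd : ∀ n, Measurable (d n))
    (hstep : ∀ n x, d (n+1) x ≤ ENNReal.ofReal S.α * S.lkop (d n) x) :
    ∀ n x, d n x ≤ (ENNReal.ofReal S.α)^n * S.lkIter n (d 0) x := by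
  intro n
  induction n with
  | zero => intro x; simp [Setup.lkIter]
  | succ n ih =>
    intro x
    set a := ENNReal.ofReal S.α with ha
    calc d (n+1) x ≤ a * S.lkop (d n) x := hstep n x
      _ ≤ a * S.lkop (fun y => a^n * S.lkIter n (d 0) y) x :=
          mul_le_mul_right (lkop_mono S (fun y => ih y) x) a
      _ = a * (a^n * S.lkop (S.lkIter n (d 0)) x) := by
          rw [lkop_cmul S (lkIter_meas S n (hd 0)) _ x]
      _ = a^(n+1) * S.lkIter (n+1) (d 0) x := by
          rw [lkIter_succ, lkIter_comm S n (hd 0), pow_succ]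
          ring

/-! ### Bounding kernel iterates by the trajectory -/

lemma lkIter_le_traj (S : Setup E Ω) {f g : E → ℝ} (hmf : Measurable f) (hmg : Measurable g)
    (x : E) (n : ℕ) :
    S.lkIter n (fun y => ENNReal.ofReal (|f y| + |g y|)) x ≤
      ∫⁻ ω, ENNReal.ofReal (|f (S.X n ω)| + |g (S.X n ω)|) ∂ S.P x := by
  haveI := S.isProb x
  have hMb : Measurable fun y => |f y| + |g y| := hmf.abs.add hmg.abs
  have hMb0 : ∀ y, (0:ℝ) ≤ |f y| + |g y| := fun y => add_nonneg (abs_nonneg _) (abs_nonneg _)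
  set Fm : ℕ → E → ℝ := fun m y => min (|f y| + |g y|) m with hFm
  have hFmmeas : ∀ m, Measurable (Fm m) := fun m => hMb.min measurable_const
  have hFm0 : ∀ m y, 0 ≤ Fm m y := fun m y => le_min (hMb0 y) (Nat.cast_nonneg m)
  have hFmle : ∀ m y, Fm m y ≤ (m : ℝ) := fun m y => min_le_right _ _
  have hFmabs : ∀ m y, |Fm m y| ≤ (m : ℝ) := fun m y => by
    rw [abs_of_nonneg (hFm0 m y)]; exact hFmle m y
  have hdecomp : (fun y => ENNReal.ofReal (|f y| + |g y|)) =
      fun y => ⨆ m : ℕ, ENNReal.ofReal (Fm m y) :=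
    funext fun y => (sup_min_natCast _).symm
  rw [hdecomp, lkIter_sup S n (fun m y => ENNReal.ofReal (Fm m y))
    (fun m => (hFmmeas m).ennreal_ofReal)
    (fun m k hmk y => ENNReal.ofReal_le_ofReal
      (min_le_min le_rfl (Nat.cast_le.mpr hmk))) x]
  refine iSup_le fun m => ?_
  have hp := rkIter_props S n (hFmmeas m) (hFm0 m) (hFmle m)
  rw [← hp.2.2.2 x, ← markov_iter S n (hFmmeas m) (hFmabs m) x,
    MeasureTheory.ofReal_integral_eq_lintegral_ofReal
      (f := fun ω => Fm m (S.X n ω))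
      (integrable_bdd _ ((hFmmeas m).comp (S.measX n)) (fun ω => hFmabs m _))
      (Filter.Eventually.of_forall fun ω => hFm0 m _)]
  exact lintegral_mono fun ω => ENNReal.ofReal_le_ofReal (min_le_left _ _)

/-! ### Tail estimates -/

lemma tail_sum (S : Setup E Ω) {f g : E → ℝ} (hmf : Measurable f) (hmg : Measurable g)
    (hIf : S.KilledSupInt f) (hIg : S.KilledSupInt g) (x : E) :
    (∑' n : ℕ, (ENNReal.ofReal S.α)^n *
      ∫⁻ ω, ENNReal.ofReal (|f (S.X n ω)| + |g (S.X n ω)|) ∂ S.P x) ≠ ⊤ := by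
  have hsplit : ∀ n : ℕ, (ENNReal.ofReal S.α)^n *
      (∫⁻ ω, ENNReal.ofReal (|f (S.X n ω)| + |g (S.X n ω)|) ∂ S.P x) =
      (ENNReal.ofReal S.α)^n * (∫⁻ ω, ENNReal.ofReal |f (S.X n ω)| ∂ S.P x) +
        (ENNReal.ofReal S.α)^n * ∫⁻ ω, ENNReal.ofReal |g (S.X n ω)| ∂ S.P x := by
    intro n
    rw [← mul_add]
    congr 1
    calc ∫⁻ ω, ENNReal.ofReal (|f (S.X n ω)| + |g (S.X n ω)|) ∂ S.P x
        = ∫⁻ ω, (ENNReal.ofReal |f (S.X n ω)| + ENNReal.ofReal |g (S.X n ω)|) ∂ S.P x :=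
          lintegral_congr fun ω => ENNReal.ofReal_add (abs_nonneg _) (abs_nonneg _)
      _ = _ := lintegral_add_left ((hmf.comp (S.measX n)).abs.ennreal_ofReal) _
  rw [tsum_congr hsplit, ENNReal.tsum_add]
  exact ENNReal.add_ne_top.mpr ⟨killed_tail S hIf x, killed_tail S hIg x⟩

lemma tail_tendsto (S : Setup E Ω) {f g : E → ℝ} (hmf : Measurable f) (hmg : Measurable g)
    (hIf : S.KilledSupInt f) (hIg : S.KilledSupInt g) (x : E) :
    Filter.Tendsto (fun n : ℕ => (ENNReal.ofReal S.α)^n *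
      ∫⁻ ω, ENNReal.ofReal (|f (S.X n ω)| + |g (S.X n ω)|) ∂ S.P x) atTop (𝓝 0) :=
  ENNReal.tendsto_atTop_zero_of_tsum_ne_top (tail_sum S hmf hmg hIf hIg x)

/-- value iteration sequence for the Wald–Bellman operator -/
def Setup.bTseq (S : Setup E Ω) (f g h : E → ℝ) : ℕ → E → ℝ
  | 0 => h
  | n+1 => S.bT f g h (S.bTseq f g h n)

/-- If `h = med(f, h, g)` pointwise, then there is exactly one measurable `V : E → ℝ`
solving the zero-sum Wald–Bellman equation. -/
theorem statement10 (S : Setup E Ω) (f g h : E → ℝ)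
    (hmf : Measurable f) (hmg : Measurable g) (hmh : Measurable h)
    (hIf : S.KilledSupInt f) (hIg : S.KilledSupInt g) (hIh : S.KilledSupInt h)
    (hmed : ∀ x : E, h x = med (f x) (h x) (g x)) :
    (∃ V : E → ℝ, Measurable V ∧ S.SolvesMed f g h V) ∧
      ∀ V₁ V₂ : E → ℝ, Measurable V₁ → S.SolvesMed f g h V₁ →
        Measurable V₂ → S.SolvesMed f g h V₂ → V₁ = V₂ := by
  haveI := S.isMarkovKernel
  set a : ℝ≥0∞ := ENNReal.ofReal S.α with ha
  have hsolbnd : ∀ V : E → ℝ, S.SolvesMed f g h V → ∀ y, |V y| ≤ |f y| + |g y| := by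
    intro V hs y
    rcases lt_or_ge (f y) (g y) with hfg | hfg
    · rw [(hs y).1 hfg]; exact abs_med_le _ _ _
    · rw [(hs y).2 hfg, hmed y]; exact abs_med_le _ _ _
  have hMint : ∀ x, Integrable (fun y => |f y| + |g y|) (S.K x) :=
    Mb_integrable S hmf hmg hIf hIg
  -- any sequence with the contraction property and initial bound is squeezed
  have hkey : ∀ (d : ℕ → E → ℝ≥0∞), (∀ n, Measurable (d n)) →
      (∀ n x, d (n+1) x ≤ a * S.lkop (d n) x) →
      (∀ y, d 0 y ≤ 2 * ENNReal.ofReal (|f y| + |g y|)) →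
      ∀ n x, d n x ≤ 2 * (a ^ n *
        ∫⁻ ω, ENNReal.ofReal (|f (S.X n ω)| + |g (S.X n ω)|) ∂ S.P x) := by
    intro d hd hstep h0 n x
    calc d n x ≤ a^n * S.lkIter n (d 0) x := iter_bound S d hd hstep n x
      _ ≤ a^n * S.lkIter n (fun y => 2 * ENNReal.ofReal (|f y| + |g y|)) x :=
          mul_le_mul_right (lkIter_mono S n h0 x) _
      _ = a^n * (2 * S.lkIter n (fun y => ENNReal.ofReal (|f y| + |g y|)) x) := by
          rw [lkIter_cmul S n (u := fun y => ENNReal.ofReal (|f y| + |g y|)) (hmf.abs.add hmg.abs).ennreal_ofReal 2 x]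
      _ ≤ a^n * (2 * ∫⁻ ω, ENNReal.ofReal (|f (S.X n ω)| + |g (S.X n ω)|) ∂ S.P x) :=
          mul_le_mul_right (mul_le_mul_right (lkIter_le_traj S hmf hmg x n) 2) _
      _ = 2 * (a^n * ∫⁻ ω, ENNReal.ofReal (|f (S.X n ω)| + |g (S.X n ω)|) ∂ S.P x) := by
          ring
  -- uniqueness
  have huniq : ∀ V₁ V₂ : E → ℝ, Measurable V₁ → S.SolvesMed f g h V₁ →
      Measurable V₂ → S.SolvesMed f g h V₂ → V₁ = V₂ := by
    intro V₁ V₂ hmV₁ hs₁ hmV₂ hs₂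
    funext x
    set u : E → ℝ≥0∞ := fun y => ENNReal.ofReal |V₁ y - V₂ y| with hu
    have humeas : Measurable u := (hmV₁.sub hmV₂).abs.ennreal_ofReal
    have hstep : ∀ z, u z ≤ a * S.lkop u z := by
      intro z
      have e1 := (solves_iff S f g h V₁).mp hs₁ z
      have e2 := (solves_iff S f g h V₂).mp hs₂ z
      have e3 : u z = ENNReal.ofReal |S.bT f g h V₁ z - S.bT f g h V₂ z| := by
        simp only [hu]
        rw [e1, e2]
      rw [e3]
      exact bT_contraction S hmV₁ hmV₂ (hsolbnd V₁ hs₁) (hsolbnd V₂ hs₂) z (hMint z)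
    have h0 : ∀ y, u y ≤ 2 * ENNReal.ofReal (|f y| + |g y|) := by
      intro y
      rw [two_mul, ← ENNReal.ofReal_add (add_nonneg (abs_nonneg _) (abs_nonneg _))
        (add_nonneg (abs_nonneg _) (abs_nonneg _))]
      refine ENNReal.ofReal_le_ofReal ?_
      have hb1 := hsolbnd V₁ hs₁ y
      have hb2 := hsolbnd V₂ hs₂ y
      calc |V₁ y - V₂ y| ≤ |V₁ y| + |V₂ y| := abs_sub _ _
        _ ≤ _ := by linarith
    have hle := hkey (fun _ => u) (fun _ => humeas) (fun n z => hstep z) h0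
    have hten : Tendsto (fun n : ℕ => 2 * (a ^ n *
        ∫⁻ ω, ENNReal.ofReal (|f (S.X n ω)| + |g (S.X n ω)|) ∂ S.P x)) atTop (𝓝 0) := by
      have h2 := ENNReal.Tendsto.const_mul (a := (2:ℝ≥0∞))
        (tail_tendsto S hmf hmg hIf hIg x) (Or.inr (by norm_num : (2:ℝ≥0∞) ≠ ⊤))
      simpa using h2
    have hzero : u x = 0 := le_zero_iff.mp (ge_of_tendsto' hten (fun n => hle n x))
    have habs : |V₁ x - V₂ x| ≤ 0 := ENNReal.ofReal_eq_zero.mp hzero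
    exact sub_eq_zero.mp (abs_eq_zero.mp (le_antisymm habs (abs_nonneg _)))
  refine ⟨?_, huniq⟩
  -- existence via value iteration
  set W : ℕ → E → ℝ := S.bTseq f g h with hW
  have hWsucc : ∀ n, W (n+1) = S.bT f g h (W n) := fun n => rfl
  have hWmeas : ∀ n, Measurable (W n) := by
    intro n; induction n with
    | zero => exact hmh
    | succ n ih => rw [hWsucc]; exact bT_meas S hmf hmg hmh ih
  have hWbnd : ∀ n y, |W n y| ≤ |f y| + |g y| := by
    intro n; induction n with
    | zero => intro y; rw [show W 0 y = h y from rfl, hmed y]; exact abs_med_le _ _ _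
    | succ n _ => intro y; rw [hWsucc]; exact bT_bnd S hmed (W n) y
  set d : ℕ → E → ℝ≥0∞ := fun n y => ENNReal.ofReal |W (n+1) y - W n y| with hd
  have hdmeas : ∀ n, Measurable (d n) :=
    fun n => ((hWmeas (n+1)).sub (hWmeas n)).abs.ennreal_ofReal
  have hdstep : ∀ n z, d (n+1) z ≤ a * S.lkop (d n) z := by
    intro n z
    have hc := bT_contraction S (f := f) (g := g) (h := h) (hWmeas (n+1)) (hWmeas n)
      (hWbnd (n+1)) (hWbnd n) z (hMint z)
    have e : d (n+1) z = ENNReal.ofReal |S.bT f g h (W (n+1)) z - S.bT f g h (W n) z| := by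
      simp only [hd]
      rw [hWsucc (n+1), hWsucc n]
    rw [e]
    exact hc
  have hd0 : ∀ y, d 0 y ≤ 2 * ENNReal.ofReal (|f y| + |g y|) := by
    intro y
    rw [two_mul, ← ENNReal.ofReal_add (add_nonneg (abs_nonneg _) (abs_nonneg _))
      (add_nonneg (abs_nonneg _) (abs_nonneg _))]
    refine ENNReal.ofReal_le_ofReal ?_
    have hb1 := hWbnd 1 y
    have hb2 := hWbnd 0 y
    calc |W 1 y - W 0 y| ≤ |W 1 y| + |W 0 y| := abs_sub _ _
      _ ≤ _ := by linarith
  have hdle := hkey d hdmeas hdstep hd0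
  have hcauchy : ∀ x, CauchySeq (fun n => W n x) := by
    intro x
    set bnd : ℕ → ℝ≥0∞ := fun n => 2 * (a ^ n *
      ∫⁻ ω, ENNReal.ofReal (|f (S.X n ω)| + |g (S.X n ω)|) ∂ S.P x) with hbnd
    have hsum : (∑' n, bnd n) ≠ ⊤ := by
      simp only [hbnd]
      rw [ENNReal.tsum_mul_left]
      exact ENNReal.mul_ne_top (by norm_num) (tail_sum S hmf hmg hIf hIg x)
    have hfin : ∀ n, bnd n ≠ ⊤ := ENNReal.ne_top_of_tsum_ne_top hsum
    refine cauchySeq_of_dist_le_of_summable (fun n => (bnd n).toReal) ?_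
      (ENNReal.summable_toReal hsum)
    intro n
    have h1 : ENNReal.ofReal (dist (W n x) (W (n+1) x)) ≤ bnd n := by
      rw [Real.dist_eq, abs_sub_comm]
      exact hdle n x
    calc dist (W n x) (W (n+1) x)
        = (ENNReal.ofReal (dist (W n x) (W (n+1) x))).toReal :=
          (ENNReal.toReal_ofReal dist_nonneg).symm
      _ ≤ (bnd n).toReal := ENNReal.toReal_mono (hfin n) h1
  set V : E → ℝ := fun x => limUnder atTop (fun n => W n x) with hV
  have hVlim : ∀ x, Tendsto (fun n => W n x) atTop (𝓝 (V x)) :=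
    fun x => (hcauchy x).tendsto_limUnder
  have hVmeas : Measurable V :=
    measurable_of_tendsto_metrizable (fun n => hWmeas n) (tendsto_pi_nhds.mpr hVlim)
  have hfix : ∀ x, V x = S.bT f g h V x := by
    intro x
    have h1 : Tendsto (fun n => W (n+1) x) atTop (𝓝 (V x)) :=
      (hVlim x).comp (tendsto_add_atTop_nat 1)
    have h2 : Tendsto (fun n => S.bT f g h (W n) x) atTop (𝓝 (S.bT f g h V x)) := by
      by_cases hfg : f x < g x
      · have hk : Tendsto (fun n => S.kint (W n) x) atTop (𝓝 (S.kint V x)) := by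
          refine MeasureTheory.tendsto_integral_of_dominated_convergence
            (fun y => |f y| + |g y|) (fun n => (hWmeas n).aestronglyMeasurable) (hMint x)
            (fun n => Filter.Eventually.of_forall fun y => by
              simpa [Real.norm_eq_abs] using hWbnd n y)
            (Filter.Eventually.of_forall fun y => hVlim y)
        have hk2 : Tendsto (fun n => S.α * S.kint (W n) x) atTop (𝓝 (S.α * S.kint V x)) :=
          hk.const_mul S.α
        have hdist : Tendsto (fun n => dist (S.α * S.kint (W n) x) (S.α * S.kint V x))
            atTop (𝓝 0) := tendsto_iff_dist_tendsto_zero.mp hk2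
        have hmedt : Tendsto (fun n => med (f x) (S.α * S.kint (W n) x) (g x)) atTop
            (𝓝 (med (f x) (S.α * S.kint V x) (g x))) := by
          rw [tendsto_iff_dist_tendsto_zero]
          refine squeeze_zero (fun n => dist_nonneg) (fun n => ?_) hdist
          rw [Real.dist_eq, Real.dist_eq]
          exact med_lipschitz _ _ _ _
        simp only [Setup.bT, if_pos hfg]
        exact hmedt
      · simp only [Setup.bT, if_neg hfg]
        exact tendsto_const_nhds
    have h3 : (fun n => W (n+1) x) = fun n => S.bT f g h (W n) x :=
      funext fun n => by rw [hWsucc]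
    exact tendsto_nhds_unique (h3 ▸ h1) h2
  exact ⟨V, hVmeas, (solves_iff S f g h V).mpr hfix⟩

end DynkinGame
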